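/- A simple connected graph Γ has adjacency matrix rank 2 over ℝ if and only if Γ is obtained from K_2 by multiplication of vertices, i.e., Γ is a complete bipartite graph K_{a,b} with a, b ≥ 1. -/

import Mathlib

open SimpleGraph

open Matrix Module Submodule in
private lemma rank_two_of_partition {V : Type*} [Fintype V] [DecidableEq V]
    (G : SimpleGraph V) [DecidableRel G.Adj] (p : V → Prop) [DecidablePred p]
    (u v : V) (hu : p u) (hv : ¬ p v)
    (hadj : ∀ x y, G.Adj x y ↔ (p x ∧ ¬ p y ∨ ¬ p x ∧ p y)) :
    (G.adjMatrix ℝ).rank = 2 := by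
  classical
  rw [Matrix.rank_eq_finrank_span_cols,
    show (G.adjMatrix ℝ).col = G.adjMatrix ℝ from transpose_adjMatrix G]
  set s : V → ℝ := fun x => if p x then 1 else 0 with hs
  set t : V → ℝ := fun x => if p x then 0 else 1 with ht
  have hrow : ∀ w, (G.adjMatrix ℝ) w = if p w then t else s := by
    intro w
    funext x
    by_cases hw : p w <;> by_cases hx : p x <;>
      simp [adjMatrix_apply, hadj, hw, hx, hs, ht]
  have hrange : Set.range (G.adjMatrix ℝ) = {t, s} := by
    apply Set.Subset.antisymm
    · rintro _ ⟨w, rfl⟩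
      rw [hrow w]
      by_cases hw : p w <;> simp [hw]
    · rintro x (rfl | rfl)
      · exact ⟨u, by rw [hrow u]; simp [hu]⟩
      · exact ⟨v, by rw [hrow v]; simp [hv]⟩
  have hind : LinearIndependent ℝ ![t, s] := by
    rw [LinearIndependent.pair_iff]
    intro a b hab
    have h1 := congrFun hab v
    have h2 := congrFun hab u
    simp [hs, ht, hu, hv] at h1 h2
    exact ⟨h1, h2⟩
  have hr : Set.range ![t, s] = {t, s} := by
    ext x; simp [Fin.exists_fin_two, eq_comm, or_comm]
  rw [hrange, ← hr, finrank_span_eq_card hind, Fintype.card_fin]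

private lemma exists_adj_aux {V : Type*} [Fintype V] (G : SimpleGraph V)
    (hG : G.Connected) (hcard : 2 ≤ Fintype.card V) (w : V) : ∃ y, G.Adj w y := by
  obtain ⟨y, hy⟩ := Fintype.exists_ne_of_one_lt_card (by omega) w
  obtain ⟨q⟩ := hG.preconnected w y
  exact ⟨q.getVert 1, q.adj_snd (SimpleGraph.Walk.not_nil_of_ne (fun h => hy h.symm))⟩

/-- A simple connected graph (with at least two vertices) has adjacency matrix rank 2 over
`ℝ` if and only if it is a complete bipartite graph `K_{a,b}` with `a, b ≥ 1` (equivalently,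
it is obtained from `K_2` by multiplication of vertices). -/
theorem stmt_18 {V : Type*} [Fintype V] [DecidableEq V] (G : SimpleGraph V)
    [DecidableRel G.Adj] (hG : G.Connected) (hcard : 2 ≤ Fintype.card V) :
    (G.adjMatrix ℝ).rank = 2 ↔
      ∃ a b : ℕ, 0 < a ∧ 0 < b ∧
        Nonempty (G ≃g completeBipartiteGraph (Fin a) (Fin b)) := by
  classical
  constructor
  · intro hrank
    have hV : Nonempty V := Fintype.card_pos_iff.mp (by omega)
    obtain ⟨u⟩ := hV
    obtain ⟨v, huv⟩ := exists_adj_aux G hG hcard u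
    rw [Matrix.rank_eq_finrank_span_cols,
      show (G.adjMatrix ℝ).col = G.adjMatrix ℝ from transpose_adjMatrix G] at hrank
    set A := G.adjMatrix ℝ with hA
    have hA1 : ∀ {x y : V}, G.Adj x y → A x y = 1 := by
      intro x y h; simp [hA, h]
    have hA0 : ∀ {x y : V}, ¬ G.Adj x y → A x y = 0 := by
      intro x y h; simp [hA, h]
    have hind : LinearIndependent ℝ ![A u, A v] := by
      rw [LinearIndependent.pair_iff]
      intro a b hab
      have h1 := congrFun hab v
      have h2 := congrFun hab u
      simp only [Pi.add_apply, Pi.smul_apply, smul_eq_mul, Pi.zero_apply] at h1 h2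
      rw [hA1 huv, hA0 (G.loopless.irrefl v), mul_one, mul_zero, add_zero] at h1
      rw [hA0 (G.loopless.irrefl u), hA1 huv.symm, mul_zero, mul_one, zero_add] at h2
      exact ⟨h1, h2⟩
    have hle : Submodule.span ℝ ({A u, A v} : Set (V → ℝ)) ≤
        Submodule.span ℝ (Set.range A) := by
      apply Submodule.span_mono
      rintro x (rfl | rfl)
      exacts [⟨u, rfl⟩, ⟨v, rfl⟩]
    have hr : Set.range ![A u, A v] = {A u, A v} := by
      ext x; simp [Fin.exists_fin_two, eq_comm, or_comm]
    have hfr : Module.finrank ℝ (Submodule.span ℝ ({A u, A v} : Set (V → ℝ))) = 2 := by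
      rw [← hr, finrank_span_eq_card hind, Fintype.card_fin]
    have hspan : Submodule.span ℝ ({A u, A v} : Set (V → ℝ)) =
        Submodule.span ℝ (Set.range A) :=
      Submodule.eq_of_le_of_finrank_eq hle (by rw [hfr, hrank])
    have hdecomp : ∀ w, A w = A w v • A u + A w u • A v := by
      intro w
      have hw : A w ∈ Submodule.span ℝ ({A u, A v} : Set (V → ℝ)) := by
        rw [hspan]; exact Submodule.subset_span ⟨w, rfl⟩
      obtain ⟨a, b, hab⟩ := Submodule.mem_span_pair.mp hw
      have ha := congrFun hab v
      have hb := congrFun hab u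
      simp only [Pi.add_apply, Pi.smul_apply, smul_eq_mul] at ha hb
      rw [hA1 huv, hA0 (G.loopless.irrefl v), mul_one, mul_zero, add_zero] at ha
      rw [hA0 (G.loopless.irrefl u), hA1 huv.symm, mul_zero, mul_one, zero_add] at hb
      rw [← ha, ← hb]
      exact hab.symm
    have hprod : ∀ w, ¬ (G.Adj u w ∧ G.Adj v w) := by
      rintro w ⟨h1, h2⟩
      have hww := congrFun (hdecomp w) w
      simp only [Pi.add_apply, Pi.smul_apply, smul_eq_mul] at hww
      rw [hA0 (G.loopless.irrefl w), hA1 h1, hA1 h2, hA1 h1.symm, hA1 h2.symm] at hww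
      norm_num at hww
    have hor : ∀ w, G.Adj u w ∨ G.Adj v w := by
      intro w
      by_contra hcon
      push_neg at hcon
      obtain ⟨y, hy⟩ := exists_adj_aux G hG hcard w
      have hwy := congrFun (hdecomp w) y
      simp only [Pi.add_apply, Pi.smul_apply, smul_eq_mul] at hwy
      rw [hA1 hy, hA0 (fun h => hcon.2 h.symm), hA0 (fun h => hcon.1 h.symm)] at hwy
      norm_num at hwy
    have hrowu : ∀ w, ¬ G.Adj u w → A w = A u := by
      intro w hw
      have h2 : G.Adj v w := (hor w).resolve_left hw
      rw [hdecomp w, hA1 h2.symm, hA0 (fun h => hw h.symm), one_smul, zero_smul, add_zero]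
    have hrowv : ∀ w, G.Adj u w → A w = A v := by
      intro w hw
      have h2 : ¬ G.Adj v w := fun h => hprod w ⟨hw, h⟩
      rw [hdecomp w, hA0 (fun h => h2 h.symm), hA1 hw.symm, zero_smul, one_smul, zero_add]
    have hAdjEq : ∀ x x', A x = A x' → ∀ y, (G.Adj x y ↔ G.Adj x' y) := by
      intro x x' h y
      have hxy := congrFun h y
      by_cases h1 : G.Adj x y <;> by_cases h2 : G.Adj x' y
      · simp [h1, h2]
      · rw [hA1 h1, hA0 h2] at hxy; norm_num at hxy
      · rw [hA0 h1, hA1 h2] at hxy; norm_num at hxy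
      · simp [h1, h2]
    have hadj : ∀ x y, G.Adj x y ↔
        (G.Adj u x ∧ ¬ G.Adj u y ∨ ¬ G.Adj u x ∧ G.Adj u y) := by
      intro x y
      by_cases hx : G.Adj u x
      · rw [hAdjEq x v (hrowv x hx) y]
        by_cases hy : G.Adj u y
        · simp only [hx, hy, not_true, and_false, false_and, or_false, iff_false,
            and_true, true_and]
          exact fun h => hprod y ⟨hy, h⟩
        · simp only [hx, hy, not_false_iff, and_true, true_and, and_false, false_and,
            or_false, iff_true]
          exact (hor y).resolve_left hy
      · rw [hAdjEq x u (hrowu x hx) y]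
        by_cases hy : G.Adj u y
        · simp [hx, hy]
        · simp [hx, hy]
    refine ⟨Fintype.card {w // G.Adj u w}, Fintype.card {w // ¬ G.Adj u w},
      Fintype.card_pos_iff.mpr ⟨⟨v, huv⟩⟩, Fintype.card_pos_iff.mpr ⟨⟨u, G.loopless.irrefl u⟩⟩, ⟨?_⟩⟩
    refine ⟨((Equiv.sumCompl (fun w => G.Adj u w)).symm.trans
      (Equiv.sumCongr (Fintype.equivFin {w // G.Adj u w})
        (Fintype.equivFin {w // ¬ G.Adj u w}))), ?_⟩
    intro x y
    by_cases hx : G.Adj u x <;> by_cases hy : G.Adj u y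
    · simp [Equiv.sumCompl_symm_apply_of_pos hx, Equiv.sumCompl_symm_apply_of_pos hy,
        hadj x y, hx, hy]
    · simp [Equiv.sumCompl_symm_apply_of_pos hx, Equiv.sumCompl_symm_apply_of_neg hy,
        hadj x y, hx, hy]
    · simp [Equiv.sumCompl_symm_apply_of_neg hx, Equiv.sumCompl_symm_apply_of_pos hy,
        hadj x y, hx, hy]
    · simp [Equiv.sumCompl_symm_apply_of_neg hx, Equiv.sumCompl_symm_apply_of_neg hy,
        hadj x y, hx, hy]
  · rintro ⟨a, b, ha, hb, ⟨e⟩⟩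
    have hadj : ∀ x y, G.Adj x y ↔
        ((∃ i, e x = Sum.inl i) ∧ ¬ (∃ i, e y = Sum.inl i) ∨
          ¬ (∃ i, e x = Sum.inl i) ∧ (∃ i, e y = Sum.inl i)) := by
      intro x y
      rw [← e.map_rel_iff]
      cases hex : e x <;> cases hey : e y <;> simp [hex, hey]
    exact rank_two_of_partition G (fun x => ∃ i, e x = Sum.inl i)
      (e.symm (Sum.inl ⟨0, ha⟩)) (e.symm (Sum.inr ⟨0, hb⟩))
      ⟨⟨0, ha⟩, by simp⟩ (by simp) hadj
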